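/- In the n-qubit Hilbert space (ℂ²)^{⊗n}, for any pairwise distinct qubit indices i, j, k, the nested commutator identity [J_{ik}, [J_{ij}, R_{jk}]] = 2 · S_{ik} · Z_j holds, where [A, B] = AB − BA. -/

import Mathlib

open Matrix Complex

attribute [local instance 100] LieRing.ofAssociativeRing

noncomputable section

/-- Computational basis labels for `n` qubits: bit strings of length `n`. -/
abbrev QState (n : ℕ) := Fin n → Fin 2

/-- Operators on the `n`-qubit Hilbert space `(ℂ²)^⊗n`, as matrices in the
computational basis. -/
abbrev QOp (n : ℕ) := Matrix (QState n) (QState n) ℂ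

/-- Flip the bit at position `m` of a basis label. -/
def flipBit {n : ℕ} (m : Fin n) (b : QState n) : QState n :=
  Function.update b m (1 - b m)

/-- The Pauli `X` operator acting on qubit `m` (identity elsewhere). -/
def pauliX {n : ℕ} (m : Fin n) : QOp n :=
  Matrix.of fun b b' => if b = flipBit m b' then 1 else 0

/-- The Pauli `Y` operator acting on qubit `m` (identity elsewhere):
`Y|0⟩ = i|1⟩`, `Y|1⟩ = -i|0⟩`. -/
def pauliY {n : ℕ} (m : Fin n) : QOp n :=
  Matrix.of fun b b' =>
    if b = flipBit m b' then (if b' m = 0 then Complex.I else -Complex.I) else 0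

/-- The Pauli `Z` operator acting on qubit `m` (identity elsewhere). -/
def pauliZ {n : ℕ} (m : Fin n) : QOp n :=
  Matrix.of fun b b' => if b = b' then (if b m = 0 then 1 else -1) else 0

/-- `R_{pq} = (X_p X_q + Y_p Y_q)/2`. -/
def opR {n : ℕ} (p q : Fin n) : QOp n :=
  (1/2 : ℂ) • (pauliX p * pauliX q + pauliY p * pauliY q)

/-- `J_{pq} = (X_p Y_q − Y_p X_q)/2`. -/
def opJ {n : ℕ} (p q : Fin n) : QOp n :=
  (1/2 : ℂ) • (pauliX p * pauliY q - pauliY p * pauliX q)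

/-- `E_{pq} = (I − Z_p Z_q)/2`. -/
def opE {n : ℕ} (p q : Fin n) : QOp n :=
  (1/2 : ℂ) • ((1 : QOp n) - pauliZ p * pauliZ q)

/-- `S_{pq} = (Z_p − Z_q)/2`. -/
def opS {n : ℕ} (p q : Fin n) : QOp n :=
  (1/2 : ℂ) • (pauliZ p - pauliZ q)

/-- Hamming weight of a basis label. -/
def wt {n : ℕ} (b : QState n) : ℕ := ∑ i, (b i : ℕ)

/-- Basis labels of the Hamming-weight-`k` subspace `H_{n,k}`. -/
abbrev HWBasis (n k : ℕ) := {b : QState n // wt b = k}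

/-- Restriction (compression) of an `n`-qubit operator to the Hamming-weight-`k`
subspace; for Hamming-weight-preserving operators this is the restriction. -/
def restrict {n : ℕ} (k : ℕ) (M : QOp n) : Matrix (HWBasis n k) (HWBasis n k) ℂ :=
  Matrix.of fun x y => M x.1 y.1

/-- The dynamical Lie algebra generated by a set `G` of (Hermitian) operators:
the real Lie algebra generated by `{i·H : H ∈ G}` under commutators and real
linear combinations. -/
def DLA {ι : Type*} [Fintype ι] [DecidableEq ι] (G : Set (Matrix ι ι ℂ)) :
    LieSubalgebra ℝ (Matrix ι ι ℂ) :=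
  LieSubalgebra.lieSpan ℝ _ ((fun H => Complex.I • H) '' G)

/-- The real dimension of the dynamical Lie algebra generated by `G`. -/
def dlaDim {ι : Type*} [Fintype ι] [DecidableEq ι] (G : Set (Matrix ι ι ℂ)) : ℕ :=
  Module.finrank ℝ ↥(DLA G)

/-- The cyclic successor `p + 1 (mod n)` of a qubit index. -/
def cyc {n : ℕ} (p : Fin n) : Fin n :=
  ⟨(p.1 + 1) % n, Nat.mod_lt _ (Nat.lt_of_le_of_lt (Nat.zero_le _) p.2)⟩


lemma flip_apply_self {n : ℕ} (m : Fin n) (b : QState n) : flipBit m b m = 1 - b m := by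
  simp [flipBit]
lemma flip_apply_ne {n : ℕ} {m l : Fin n} (h : l ≠ m) (b : QState n) : flipBit m b l = b l := by
  simp [flipBit, Function.update_of_ne h]

lemma flipBit_flip_flip {n : ℕ} (m : Fin n) (b : QState n) : flipBit m (flipBit m b) = b := by
  funext l
  rcases eq_or_ne l m with rfl | h
  · rw [flip_apply_self, flip_apply_self]
    omega
  · rw [flip_apply_ne h, flip_apply_ne h]

lemma flip_comm {n : ℕ} {l m : Fin n} (h : l ≠ m) (b : QState n) :
    flipBit l (flipBit m b) = flipBit m (flipBit l b) := by
  funext p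
  rcases eq_or_ne p l with rfl | hpl
  · rw [flip_apply_self, flip_apply_ne h, flip_apply_ne h, flip_apply_self]
  · rcases eq_or_ne p m with rfl | hpm
    · rw [flip_apply_ne hpl, flip_apply_self, flip_apply_self, flip_apply_ne hpl]
    · rw [flip_apply_ne hpl, flip_apply_ne hpm, flip_apply_ne hpm, flip_apply_ne hpl]

def G {n : ℕ} (f : QState n → QState n) (u : QState n → ℂ) : QOp n :=
  Matrix.of fun b b' => if b = f b' then u b' else 0

lemma G_mul {n : ℕ} (f g : QState n → QState n) (u v : QState n → ℂ) :
    G f u * G g v = G (f ∘ g) (fun b => u (g b) * v b) := by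
  ext b b'
  rw [Matrix.mul_apply]
  rw [Finset.sum_eq_single (g b')]
  · simp [G]
  · intro c _ hc
    simp [G, hc]
  · simp

lemma G_smul {n : ℕ} (c : ℂ) (f : QState n → QState n) (u : QState n → ℂ) :
    c • G f u = G f (fun b => c * u b) := by
  ext b b'; simp [G, mul_ite]

lemma G_sub {n : ℕ} (f : QState n → QState n) (u v : QState n → ℂ) :
    G f u - G f v = G f (fun b => u b - v b) := by
  ext b b'; simp [G]; split <;> simp

lemma G_add {n : ℕ} (f : QState n → QState n) (u v : QState n → ℂ) :
    G f u + G f v = G f (fun b => u b + v b) := by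
  ext b b'; simp [G]; split <;> simp

lemma pauliX_eq {n : ℕ} (m : Fin n) : pauliX m = G (flipBit m) (fun _ => 1) := rfl
lemma pauliY_eq {n : ℕ} (m : Fin n) :
    pauliY m = G (flipBit m) (fun b => if b m = 0 then Complex.I else -Complex.I) := rfl
lemma pauliZ_eq {n : ℕ} (m : Fin n) :
    pauliZ m = G id (fun b => if b m = 0 then 1 else -1) := by
  ext b b'
  simp only [pauliZ, G, Matrix.of_apply, id]
  split
  · next h => subst h; rfl
  · rfl

lemma fin2_cases (x : Fin 2) : x = 0 ∨ x = 1 := by omega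

lemma opJ_eq {n : ℕ} {p q : Fin n} (h : p ≠ q) :
    opJ p q = G (flipBit p ∘ flipBit q)
      (fun b => if b p = b q then 0 else if b q = 0 then Complex.I else -Complex.I) := by
  rw [opJ, pauliX_eq, pauliY_eq, pauliX_eq, pauliY_eq, G_mul, G_mul, G_sub, G_smul]
  exact congrArg (G _) (funext fun b => by
    rw [flip_apply_ne h]
    rcases fin2_cases (b p) with hp | hp <;> rcases fin2_cases (b q) with hq | hq <;>
      simp [hp, hq] <;> ring)

lemma opR_eq {n : ℕ} {p q : Fin n} (h : p ≠ q) :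
    opR p q = G (flipBit p ∘ flipBit q) (fun b => if b p = b q then 0 else 1) := by
  rw [opR, pauliX_eq, pauliY_eq, pauliX_eq, pauliY_eq, G_mul, G_mul, G_add, G_smul]
  exact congrArg (G _) (funext fun b => by
    rw [flip_apply_ne h]
    rcases fin2_cases (b p) with hp | hp <;> rcases fin2_cases (b q) with hq | hq <;>
      simp [hp, hq, Complex.I_mul_I] <;> ring)

lemma opSZ_eq {n : ℕ} {p q r : Fin n} :
    (2:ℂ) • (opS p q * pauliZ r) = G id (fun b =>
      ((if b p = 0 then 1 else -1) - (if b q = 0 then 1 else -1)) *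
      (if b r = 0 then 1 else -1)) := by
  rw [opS, pauliZ_eq, pauliZ_eq, pauliZ_eq, G_sub, G_smul, G_mul, G_smul]
  exact congrArg (G _) (funext fun b => by simp only [id_eq]; ring)

/-- `[J_{ik}, [J_{ij}, R_{jk}]] = 2·S_{ik}·Z_j` for pairwise distinct qubits. -/
theorem comm_J_J_R {n : ℕ} (i j k : Fin n) (hij : i ≠ j) (hjk : j ≠ k) (hik : i ≠ k) :
    ⁅opJ i k, ⁅opJ i j, opR j k⁆⁆ = (2 : ℂ) • (opS i k * pauliZ j) := by
  rw [opSZ_eq, opJ_eq hik, opJ_eq hij, opR_eq hjk]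
  simp only [Ring.lie_def, mul_sub, sub_mul, G_mul, Function.comp]
  have aba : ∀ {l m : Fin n}, l ≠ m → ∀ b : QState n,
      flipBit l (flipBit m (flipBit l b)) = flipBit m b := by
    intro l m h b; rw [flip_comm h, flipBit_flip_flip]
  ext b b'
  simp only [G, Matrix.of_apply, Matrix.sub_apply, Function.comp_apply, id_eq,
    flipBit_flip_flip, aba hij, aba hij.symm, aba hjk, aba hjk.symm, aba hik, aba hik.symm,
    flip_apply_self, flip_apply_ne hij, flip_apply_ne hij.symm, flip_apply_ne hjk,
    flip_apply_ne hjk.symm, flip_apply_ne hik, flip_apply_ne hik.symm]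
  rcases eq_or_ne b b' with rfl | hb
  · simp only [if_pos rfl]
    rcases fin2_cases (b i) with hi | hi <;> rcases fin2_cases (b j) with hj | hj <;>
      rcases fin2_cases (b k) with hk | hk <;>
      norm_num [hi, hj, hk, Complex.I_mul_I, flipBit_flip_flip]
  · simp [hb]

end
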